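/- Let A be a parity automaton with costs, and let (ρ_j^1)_{j∈ℕ} and (ρ_j^2)_{j∈ℕ} be sequences of non-empty finite runs of A such that for every j the runs ρ_j^1 and ρ_j^2 have the same type, the last state of ρ_j^i equals the first state of ρ_{j+1}^i for every j and i ∈ {1,2}, and sup_j |ρ_j^1| < ∞ and sup_j |ρ_j^2| < ∞. Then the infinite run ρ_0^1 ρ_1^1 ρ_2^1 ⋯ is accepting if, and only if, the infinite run ρ_0^2 ρ_1^2 ρ_2^2 ⋯ is accepting. -/

import Mathlib

attribute [local instance] Classical.propDecidable

noncomputable section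

/-- A parity automaton with costs `(Q, A, qI, δ, Ω, Cst)`.
`Cst q a = true` means that the transition `(q, a, δ q a)` is an increment-transition,
`Cst q a = false` means it is an `ε`-transition. -/
structure PACost (Q : Type) (A : Type) where
  qI : Q
  δ : Q → A → Q
  Ω : Q → ℕ
  Cst : Q → A → Bool

namespace PACost

variable {Q A : Type}

/-- The state reached after processing the first `n` letters of `w` starting in `q0`. -/
def stateAt (M : PACost Q A) (q0 : Q) (w : ℕ → A) : ℕ → Q
  | 0 => q0
  | n + 1 => M.δ (stateAt M q0 w n) (w n)

/-- The cost (number of increment-transitions) of the run infix between positions `m` and `n`. -/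
def segCost (M : PACost Q A) (q0 : Q) (w : ℕ → A) (m n : ℕ) : ℕ :=
  ((Finset.Ico m n).filter fun j => M.Cst (stateAt M q0 w j) (w j) = true).card

/-- `Ans c`: the set of even colors of `M` that are larger than `c`. -/
def Ans (M : PACost Q A) (c : ℕ) : Set ℕ :=
  { c' | (∃ q, M.Ω q = c') ∧ c < c' ∧ Even c' }

/-- The cost-of-response at position `n` of the run of `M` on `w` starting in `q0`. -/
def Cor (M : PACost Q A) (q0 : Q) (w : ℕ → A) (n : ℕ) : ℕ∞ :=
  if Even (M.Ω (stateAt M q0 w n)) then 0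
  else
    sInf { c : ℕ∞ | ∃ n', n < n' ∧
      M.Ω (stateAt M q0 w n') ∈ M.Ans (M.Ω (stateAt M q0 w n)) ∧
      c = (segCost M q0 w n n' : ℕ∞) }

/-- The run of `M` on `w` starting in `q0` satisfies the parity condition with costs. -/
def Accepting (M : PACost Q A) (q0 : Q) (w : ℕ → A) : Prop :=
  Filter.limsup (fun n => Cor M q0 w n) Filter.atTop < ⊤

/-- The language of `M`. -/
def Lang (M : PACost Q A) : Set (ℕ → A) := { w | Accepting M M.qI w }

/-- `M` is a finitary Büchi automaton: every transition is an increment-transition and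
all colors are `1` or `2`. -/
def FinBuchi (M : PACost Q A) : Prop :=
  (∀ q a, M.Cst q a = true) ∧ ∀ q, M.Ω q = 1 ∨ M.Ω q = 2

end PACost

/-- The finite segment `w m, w (m+1), …, w (n-1)` of an infinite word `w`. -/
def seg {A : Type} (w : ℕ → A) (m n : ℕ) : List A :=
  (List.range (n - m)).map fun i => w (m + i)

namespace PACost

/-- Types of runs: `(first state, last state, max even color, max unanswered odd color,
increment occurred)`. -/
abbrev RType (Q : Type) := Q × Q × WithBot ℕ × WithBot ℕ × Bool

variable {Q A : Type}

/-- The type of the non-empty finite run of `M` starting in `q` processing `l`. -/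
def runType (M : PACost Q A) (q : Q) (l : List A) : RType Q :=
  let sts := List.scanl M.δ q l
  let st : ℕ → Q := fun j => sts.getD j q
  ( q,
    l.foldl M.δ q,
    ((Finset.range sts.length).filter fun j => Even (M.Ω (st j))).sup
      (fun j => (M.Ω (st j) : WithBot ℕ)),
    ((Finset.range sts.length).filter fun j =>
        Odd (M.Ω (st j)) ∧ ∀ j' < sts.length, j < j' →
          ¬(Even (M.Ω (st j')) ∧ M.Ω (st j) < M.Ω (st j'))).sup
      (fun j => (M.Ω (st j) : WithBot ℕ)),
    (sts.zip l).any fun p => M.Cst p.1 p.2 )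

/-- The type of the empty run prefix starting in `q`. -/
def InitT (M : PACost Q A) (q : Q) : RType Q :=
  ( q, q,
    if Even (M.Ω q) then (M.Ω q : WithBot ℕ) else ⊥,
    if Odd (M.Ω q) then (M.Ω q : WithBot ℕ) else ⊥,
    false )

/-- The type-update function. -/
def UpdT (M : PACost Q A) (t : RType Q) (a : A) : RType Q :=
  match t with
  | (q0, q1, c0, c1, ℓ) =>
    let q1' := M.δ q1 a
    ( q0, q1',
      if Even (M.Ω q1') then max c0 ((M.Ω q1' : WithBot ℕ)) else c0,
      if Odd (M.Ω q1') then max c1 ((M.Ω q1' : WithBot ℕ))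
      else if ∃ c : ℕ, c1 = (c : WithBot ℕ) ∧ M.Ω q1' ∈ M.Ans c then ⊥
      else c1,
      ℓ || M.Cst q1 a )

end PACost

namespace PACost

variable {Q A : Type} (M : PACost Q A) (q0 : Q) (w : ℕ → A)

lemma seg_succ {m n : ℕ} (h : m ≤ n) : seg w m (n + 1) = seg w m n ++ [w n] := by
  unfold seg
  rw [show n + 1 - m = (n - m) + 1 by omega, List.range_succ, List.map_append]
  simp [Nat.add_sub_cancel' h]

lemma foldl_seg {m n : ℕ} (h : m ≤ n) :
    List.foldl M.δ (M.stateAt q0 w m) (seg w m n) = M.stateAt q0 w n := by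
  induction n, h using Nat.le_induction with
  | base => simp [seg]
  | succ n h ih => rw [seg_succ w h, List.foldl_append, ih]; rfl

lemma scanl_getD (f : Q → A → Q) :
    ∀ (l : List A) (q d : Q) (k : ℕ), k ≤ l.length →
      (List.scanl f q l).getD k d = List.foldl f q (l.take k) := by
  intro l
  induction l with
  | nil =>
    intro q d k hk
    have hk0 : k = 0 := by simpa using hk
    subst hk0; simp
  | cons a l ih =>
    intro q d k hk
    cases k with
    | zero => simp
    | succ k => simpa using ih (f q a) d k (by simpa using hk)

lemma seg_take {m n k : ℕ} (h : m + k ≤ n) : (seg w m n).take k = seg w m (m + k) := by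
  unfold seg
  rw [← List.map_take, List.take_range, Nat.add_sub_cancel_left, min_eq_left (by omega)]

lemma getD_scanl_seg {m n k : ℕ} (h : m + k ≤ n) (q' : Q) :
    (List.scanl M.δ (M.stateAt q0 w m) (seg w m n)).getD k q' = M.stateAt q0 w (m + k) := by
  rw [scanl_getD M.δ _ _ _ k (by simp [seg]; omega), seg_take w h,
    foldl_seg M q0 w (by omega)]

end PACost
namespace PACost

variable {Q A : Type} (M : PACost Q A) (q0 : Q) (w : ℕ → A)

lemma seg_length (m n : ℕ) : (seg w m n).length = n - m := by simp [seg]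

lemma seg_getD {m n k : ℕ} (h : k < n - m) (a₀ : A) : (seg w m n).getD k a₀ = w (m + k) := by
  rw [List.getD_eq_getElem _ _ (by simp [seg]; omega)]
  simp [seg]

lemma zip_scanl_any (f : Q → A → Q) (g : Q → A → Bool) (a₀ : A) :
    ∀ (l : List A) (q : Q),
      ((((List.scanl f q l).zip l).any fun p => g p.1 p.2) = true) ↔
        ∃ k, k < l.length ∧ g (List.foldl f q (l.take k)) (l.getD k a₀) = true := by
  intro l
  induction l with
  | nil => intro q; simp
  | cons a l ih =>
    intro q
    rw [List.scanl_cons]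
    simp only [List.singleton_append, List.zip_cons_cons, List.any_cons, Bool.or_eq_true, ih (f q a)]
    constructor
    · rintro (h | ⟨k, hk, h⟩)
      · exact ⟨0, by simp, by simpa using h⟩
      · exact ⟨k + 1, by simp; omega, by simpa using h⟩
    · rintro ⟨k, hk, h⟩
      cases k with
      | zero => exact Or.inl (by simpa using h)
      | succ k => exact Or.inr ⟨k, by simp at hk; omega, by simpa using h⟩

/-- Semantic max even color over positions `[m, n]`. -/
def semC0 (m n : ℕ) : WithBot ℕ :=
  ((Finset.Icc m n).filter fun p => Even (M.Ω (M.stateAt q0 w p))).sup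
    fun p => (M.Ω (M.stateAt q0 w p) : WithBot ℕ)

/-- Position `p`'s request is not answered by any position in `(p, n]`. -/
def unansIn (n p : ℕ) : Prop :=
  ∀ p' ≤ n, p < p' →
    ¬(Even (M.Ω (M.stateAt q0 w p')) ∧ M.Ω (M.stateAt q0 w p) < M.Ω (M.stateAt q0 w p'))

/-- Semantic max unanswered odd color over positions `[m, n]`. -/
def semC1 (m n : ℕ) : WithBot ℕ :=
  ((Finset.Icc m n).filter fun p => Odd (M.Ω (M.stateAt q0 w p)) ∧ unansIn M q0 w n p).sup
    fun p => (M.Ω (M.stateAt q0 w p) : WithBot ℕ)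

/-- Semantic increment flag over positions `[m, n)`. -/
def semL (m n : ℕ) : Bool :=
  decide (∃ p ∈ Finset.Ico m n, M.Cst (M.stateAt q0 w p) (w p) = true)

lemma runType_spec {m n : ℕ} (h : m < n) :
    M.runType (M.stateAt q0 w m) (seg w m n) =
      (M.stateAt q0 w m, M.stateAt q0 w n, semC0 M q0 w m n, semC1 M q0 w m n,
        semL M q0 w m n) := by
  have hlen : (List.scanl M.δ (M.stateAt q0 w m) (seg w m n)).length = n - m + 1 := by
    rw [List.length_scanl, seg_length]
  have hgetD : ∀ k ≤ n - m, ∀ q' : Q,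
      (List.scanl M.δ (M.stateAt q0 w m) (seg w m n)).getD k q' = M.stateAt q0 w (m + k) :=
    fun k hk q' => getD_scanl_seg M q0 w (by omega) q'
  have hIcc : Finset.Icc m n =
      (Finset.range (n - m + 1)).map ⟨fun j => m + j, add_right_injective m⟩ := by
    ext x
    simp only [Finset.mem_Icc, Finset.mem_map, Finset.mem_range, Function.Embedding.coeFn_mk]
    constructor
    · intro hx; exact ⟨x - m, by omega, by omega⟩
    · rintro ⟨j, hj, rfl⟩
      refine ⟨Nat.le_add_right m j, ?_⟩
      show m + j ≤ n
      omega
  unfold runType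
  simp only
  refine Prod.ext rfl (Prod.ext ?_ (Prod.ext ?_ (Prod.ext ?_ ?_)))
  · show List.foldl M.δ (M.stateAt q0 w m) (seg w m n) = M.stateAt q0 w n
    exact foldl_seg M q0 w h.le
  · -- c0
    dsimp only
    rw [semC0, hIcc, Finset.filter_map, Finset.sup_map, hlen]
    refine Finset.sup_congr ?_ ?_
    · apply Finset.filter_congr
      intro j hj
      rw [hgetD j (by simpa using Nat.lt_succ_iff.mp (Finset.mem_range.mp hj))]
      simp
    · intro j hj
      simp only [Finset.mem_filter, Finset.mem_range, Nat.lt_succ_iff] at hj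
      rw [hgetD j hj.1]
      simp
  · -- c1
    dsimp only
    rw [semC1, hIcc, Finset.filter_map, Finset.sup_map, hlen]
    refine Finset.sup_congr ?_ ?_
    · apply Finset.filter_congr
      intro j hj
      rw [Finset.mem_range, Nat.lt_succ_iff] at hj
      rw [hgetD j hj]
      simp only [Function.Embedding.coeFn_mk, Function.comp_apply, eq_iff_iff]
      constructor
      · rintro ⟨ho, hu⟩
        refine ⟨ho, ?_⟩
        intro p' hp' hlt hbad
        have hp'm : m ≤ p' := by omega
        have := hu (p' - m) (by omega) (by omega)
        rw [hgetD (p' - m) (by omega)] at this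
        rw [show m + (p' - m) = p' by omega] at this
        exact this hbad
      · rintro ⟨ho, hu⟩
        refine ⟨ho, ?_⟩
        intro j' hj' hlt
        rw [hgetD j' (by omega)]
        exact hu (m + j') (by omega) (by omega)
    · intro j hj
      simp only [Finset.mem_filter, Finset.mem_range, Nat.lt_succ_iff] at hj
      rw [hgetD j hj.1]
      simp
  · -- increment flag
    dsimp only
    rw [Bool.eq_iff_iff]
    rw [zip_scanl_any M.δ M.Cst (w 0), semL, decide_eq_true_eq, seg_length]
    constructor
    · rintro ⟨k, hk, hg⟩
      refine ⟨m + k, by simp [Finset.mem_Ico]; omega, ?_⟩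
      rwa [seg_take w (by omega), foldl_seg M q0 w (by omega), seg_getD w hk] at hg
    · rintro ⟨p, hp, hc⟩
      rw [Finset.mem_Ico] at hp
      refine ⟨p - m, by omega, ?_⟩
      rw [seg_take w (by omega), foldl_seg M q0 w (by omega), seg_getD w (by omega),
        show m + (p - m) = p by omega]
      exact hc

end PACost
namespace PACost

variable {Q A : Type} (M : PACost Q A) (q0 : Q) (w : ℕ → A)

lemma lt_semC0_iff (c : ℕ) (m n : ℕ) :
    (c : WithBot ℕ) < semC0 M q0 w m n ↔
      ∃ p, m ≤ p ∧ p ≤ n ∧ Even (M.Ω (M.stateAt q0 w p)) ∧ c < M.Ω (M.stateAt q0 w p) := by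
  rw [semC0, Finset.lt_sup_iff]
  constructor
  · rintro ⟨p, hp, hlt⟩
    rw [Finset.mem_filter, Finset.mem_Icc] at hp
    exact ⟨p, hp.1.1, hp.1.2, hp.2, by exact_mod_cast hlt⟩
  · rintro ⟨p, h1, h2, h3, h4⟩
    exact ⟨p, by rw [Finset.mem_filter, Finset.mem_Icc]; exact ⟨⟨h1, h2⟩, h3⟩,
      by exact_mod_cast h4⟩

lemma le_semC1 {m n p : ℕ} (h1 : m ≤ p) (h2 : p ≤ n) (h3 : Odd (M.Ω (M.stateAt q0 w p)))
    (h4 : unansIn M q0 w n p) :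
    (M.Ω (M.stateAt q0 w p) : WithBot ℕ) ≤ semC1 M q0 w m n := by
  rw [semC1]
  exact Finset.le_sup (f := fun p => (M.Ω (M.stateAt q0 w p) : WithBot ℕ))
    (by rw [Finset.mem_filter, Finset.mem_Icc]; exact ⟨⟨h1, h2⟩, h3, h4⟩)

lemma semC1_witness {m n : ℕ} (h : semC1 M q0 w m n ≠ ⊥) :
    ∃ p, m ≤ p ∧ p ≤ n ∧ Odd (M.Ω (M.stateAt q0 w p)) ∧ unansIn M q0 w n p ∧
      (M.Ω (M.stateAt q0 w p) : WithBot ℕ) = semC1 M q0 w m n := by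
  rcases Finset.eq_empty_or_nonempty
      ((Finset.Icc m n).filter fun p => Odd (M.Ω (M.stateAt q0 w p)) ∧ unansIn M q0 w n p) with
    he | hne
  · exact absurd (by rw [semC1, he, Finset.sup_empty]) h
  · obtain ⟨p, hp, hsup⟩ := Finset.exists_mem_eq_sup _ hne
      fun p => (M.Ω (M.stateAt q0 w p) : WithBot ℕ)
    rw [Finset.mem_filter, Finset.mem_Icc] at hp
    exact ⟨p, hp.1.1, hp.1.2, hp.2.1, hp.2.2, by rw [semC1, hsup]⟩

lemma semL_iff (m n : ℕ) :
    semL M q0 w m n = true ↔ ∃ p ∈ Finset.Ico m n, M.Cst (M.stateAt q0 w p) (w p) = true := by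
  rw [semL, decide_eq_true_eq]

lemma segCost_le_sub (m n : ℕ) : M.segCost q0 w m n ≤ n - m := by
  calc M.segCost q0 w m n ≤ (Finset.Ico m n).card := Finset.card_filter_le _ _
  _ = n - m := Nat.card_Ico m n

lemma segCost_mono {m m' n n' : ℕ} (h1 : m' ≤ m) (h2 : n ≤ n') :
    M.segCost q0 w m n ≤ M.segCost q0 w m' n' :=
  Finset.card_le_card (Finset.filter_subset_filter _ (Finset.Ico_subset_Ico h1 h2))

lemma segCost_add {m k n : ℕ} (h1 : m ≤ k) (h2 : k ≤ n) :
    M.segCost q0 w m k + M.segCost q0 w k n = M.segCost q0 w m n := by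
  unfold segCost
  rw [← Finset.card_union_of_disjoint, ← Finset.filter_union,
    Finset.Ico_union_Ico_eq_Ico h1 h2]
  exact Finset.disjoint_filter_filter (Finset.Ico_disjoint_Ico_consecutive m k n)

lemma segCost_eq_zero {m n : ℕ} (h : ∀ p ∈ Finset.Ico m n, ¬ M.Cst (M.stateAt q0 w p) (w p) = true) :
    M.segCost q0 w m n = 0 := by
  unfold segCost
  rw [Finset.card_eq_zero, Finset.filter_eq_empty_iff]
  exact h

lemma one_le_segCost {m n p : ℕ} (hp : p ∈ Finset.Ico m n)
    (h : M.Cst (M.stateAt q0 w p) (w p) = true) : 1 ≤ M.segCost q0 w m n := by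
  rw [Nat.one_le_iff_ne_zero, ← Nat.pos_iff_ne_zero, segCost, Finset.card_pos]
  exact ⟨p, Finset.mem_filter.mpr ⟨hp, h⟩⟩

lemma segCost_sum (φ : ℕ → ℕ) (hmono : Monotone φ) {a b : ℕ} (h : a ≤ b) :
    M.segCost q0 w (φ a) (φ b) = ∑ k ∈ Finset.Ico a b, M.segCost q0 w (φ k) (φ (k + 1)) := by
  induction b, h using Nat.le_induction with
  | base => simp [segCost]
  | succ b hb ih =>
    rw [Finset.sum_Ico_succ_top (by omega), ← ih,
      segCost_add M q0 w (hmono hb) (hmono (by omega))]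

lemma exists_block (φ : ℕ → ℕ) (hmono : StrictMono φ) (h0 : φ 0 = 0) (n : ℕ) :
    ∃ j, φ j ≤ n ∧ n < φ (j + 1) := by
  have hex : ∃ k, n < φ k := ⟨n + 1, lt_of_lt_of_le (Nat.lt_succ_self n) (hmono.le_apply)⟩
  classical
  let k := Nat.find hex
  have hk : n < φ k := Nat.find_spec hex
  have hk0 : k ≠ 0 := by
    intro h
    rw [h, h0] at hk
    omega
  refine ⟨k - 1, ?_, by rw [show k - 1 + 1 = k by omega]; exact hk⟩
  have := Nat.find_min hex (show k - 1 < k by omega)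
  omega

end PACost
namespace PACost

variable {Q A : Type} (M : PACost Q A) (q0 : Q) (w : ℕ → A)

lemma Cor_eq_zero {n : ℕ} (h : Even (M.Ω (M.stateAt q0 w n))) : M.Cor q0 w n = 0 :=
  if_pos h

lemma Cor_le_of_answer {n n' : ℕ} (hodd : ¬ Even (M.Ω (M.stateAt q0 w n))) (h1 : n < n')
    (h2 : Even (M.Ω (M.stateAt q0 w n'))) (h3 : M.Ω (M.stateAt q0 w n) < M.Ω (M.stateAt q0 w n')) :
    M.Cor q0 w n ≤ (M.segCost q0 w n n' : ℕ∞) := by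
  rw [Cor, if_neg hodd]
  exact sInf_le ⟨n', h1, ⟨⟨_, rfl⟩, h3, h2⟩, rfl⟩

lemma exists_answer_of_Cor_le {n : ℕ} {C : ℕ} (hodd : ¬ Even (M.Ω (M.stateAt q0 w n)))
    (h : M.Cor q0 w n ≤ (C : ℕ∞)) :
    ∃ n', n < n' ∧ Even (M.Ω (M.stateAt q0 w n')) ∧
      M.Ω (M.stateAt q0 w n) < M.Ω (M.stateAt q0 w n') ∧ M.segCost q0 w n n' ≤ C := by
  rw [Cor, if_neg hodd] at h
  by_contra hc
  push_neg at hc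
  have hlb : ∀ s ∈ { c : ℕ∞ | ∃ n', n < n' ∧
      M.Ω (M.stateAt q0 w n') ∈ M.Ans (M.Ω (M.stateAt q0 w n)) ∧
      c = (M.segCost q0 w n n' : ℕ∞) }, ((C + 1 : ℕ) : ℕ∞) ≤ s := by
    rintro s ⟨n', hn', ⟨_, hlt, hev⟩, rfl⟩
    have := hc n' hn' hev hlt
    exact_mod_cast Nat.succ_le_of_lt this
  have h2 := le_trans (le_sInf hlb) h
  have : C + 1 ≤ C := by exact_mod_cast h2
  omega

/-- The abstract "goodness" predicate on sequences of types. -/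
def GoodT (c0 c1 : ℕ → WithBot ℕ) (ℓ : ℕ → Bool) (B j : ℕ) : Prop :=
  c1 j = ⊥ ∨ ∃ j', j < j' ∧ c1 j < c0 j' ∧
    ((Finset.Ioc j j').filter fun k => ℓ k = true).card ≤ B

lemma accepting_iff_goodT (φ : ℕ → ℕ) (hmono : StrictMono φ) (h0 : φ 0 = 0) (d : ℕ)
    (hd : ∀ j, φ (j + 1) - φ j ≤ d) :
    M.Accepting q0 w ↔ ∃ B, ∀ᶠ j in Filter.atTop,
      GoodT (fun j => semC0 M q0 w (φ j) (φ (j + 1)))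
        (fun j => semC1 M q0 w (φ j) (φ (j + 1)))
        (fun j => semL M q0 w (φ j) (φ (j + 1))) B j := by
  have hφmono : Monotone φ := hmono.monotone
  have hφlt : ∀ j, φ j < φ (j + 1) := fun j => hmono (Nat.lt_succ_self j)
  constructor
  · -- Accepting → bounded goodness
    intro hacc
    obtain ⟨C, hC⟩ := WithTop.ne_top_iff_exists.mp (ne_of_lt hacc)
    have hev : ∀ᶠ n in Filter.atTop, M.Cor q0 w n < (C : ℕ∞) + 1 := by
      refine Filter.eventually_lt_of_limsup_lt ?_
      rw [← hC]
      exact (ENat.lt_add_one_iff (ENat.coe_ne_top C)).mpr le_rfl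
    obtain ⟨N, hN⟩ := Filter.eventually_atTop.mp hev
    refine ⟨C + 1, Filter.eventually_atTop.mpr ⟨N, fun j hj => ?_⟩⟩
    simp only [GoodT]
    by_cases hbot : semC1 M q0 w (φ j) (φ (j + 1)) = ⊥
    · exact Or.inl hbot
    refine Or.inr ?_
    obtain ⟨p, hp1, hp2, hodd, hunans, hpc⟩ := semC1_witness M q0 w hbot
    have hpN : N ≤ p := le_trans (le_trans hj hmono.le_apply) hp1
    have hCor : M.Cor q0 w p ≤ (C : ℕ∞) :=
      (ENat.lt_add_one_iff (by exact ENat.coe_ne_top C)).mp (hN p hpN)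
    have hoddm : ¬ Even (M.Ω (M.stateAt q0 w p)) := by
      intro hevp
      have h1 := Nat.odd_iff.mp hodd
      have h2 := Nat.even_iff.mp hevp
      omega
    obtain ⟨n', hn'1, hev', hlt', hcost⟩ := exists_answer_of_Cor_le M q0 w hoddm hCor
    have hn'big : φ (j + 1) < n' := by
      by_contra hle
      push_neg at hle
      exact hunans n' hle hn'1 ⟨hev', hlt'⟩
    obtain ⟨j', hj'1, hj'2⟩ := exists_block φ hmono h0 n'
    have hjj' : j < j' := by
      by_contra hle
      push_neg at hle
      have := hφmono (show j' + 1 ≤ j + 1 by omega)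
      omega
    refine ⟨j', hjj', ?_, ?_⟩
    · rw [← hpc, lt_semC0_iff]
      exact ⟨n', hj'1, hj'2.le, hev', hlt'⟩
    · set P : ℕ → Prop := fun k => semL M q0 w (φ k) (φ (k + 1)) = true with hP
      have hsub : (Finset.Ioc j j').filter P ⊆ insert j' ((Finset.Ioo j j').filter P) := by
        intro k hk
        rw [Finset.mem_filter, Finset.mem_Ioc] at hk
        rcases eq_or_lt_of_le hk.1.2 with rfl | hlt
        · exact Finset.mem_insert_self _ _
        · exact Finset.mem_insert_of_mem
            (by rw [Finset.mem_filter, Finset.mem_Ioo]; exact ⟨⟨hk.1.1, hlt⟩, hk.2⟩)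
      have hcard1 : ((Finset.Ioo j j').filter P).card ≤ C := by
        have hstep : ∀ k ∈ (Finset.Ioo j j').filter P, 1 ≤ M.segCost q0 w (φ k) (φ (k + 1)) := by
          intro k hk
          rw [Finset.mem_filter, hP] at hk
          obtain ⟨p', hp', hcst⟩ := (semL_iff M q0 w _ _).mp hk.2
          exact one_le_segCost M q0 w hp' hcst
        calc ((Finset.Ioo j j').filter P).card
            = ∑ k ∈ (Finset.Ioo j j').filter P, 1 := by
              rw [Finset.card_eq_sum_ones]
          _ ≤ ∑ k ∈ (Finset.Ioo j j').filter P, M.segCost q0 w (φ k) (φ (k + 1)) :=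
              Finset.sum_le_sum hstep
          _ ≤ ∑ k ∈ Finset.Ioo j j', M.segCost q0 w (φ k) (φ (k + 1)) :=
              Finset.sum_le_sum_of_subset (Finset.filter_subset _ _)
          _ = M.segCost q0 w (φ (j + 1)) (φ j') := by
              rw [← Finset.Ico_add_one_left_eq_Ioo, ← segCost_sum M q0 w φ hφmono (by omega)]
          _ ≤ M.segCost q0 w p n' := segCost_mono M q0 w hp2 hj'1
          _ ≤ C := hcost
      calc ((Finset.Ioc j j').filter P).card
          ≤ (insert j' ((Finset.Ioo j j').filter P)).card := Finset.card_le_card hsub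
        _ ≤ ((Finset.Ioo j j').filter P).card + 1 := Finset.card_insert_le _ _
        _ ≤ C + 1 := by omega
  · -- bounded goodness → Accepting
    rintro ⟨B, hB⟩
    obtain ⟨J, hJ⟩ := Filter.eventually_atTop.mp hB
    set Cb : ℕ := d + B * d with hCb
    have hclaim : ∀ n, φ J ≤ n → M.Cor q0 w n ≤ (Cb : ℕ∞) := by
      intro n hn
      obtain ⟨j, hj1, hj2⟩ := exists_block φ hmono h0 n
      have hjJ : J ≤ j := by
        by_contra hlt
        push_neg at hlt
        have := hφmono (show j + 1 ≤ J by omega)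
        omega
      by_cases hevn : Even (M.Ω (M.stateAt q0 w n))
      · rw [Cor_eq_zero M q0 w hevn]; exact zero_le
      by_cases hua : unansIn M q0 w (φ (j + 1)) n
      · -- answered only after the block: use the type sequence
        have hle1 : (M.Ω (M.stateAt q0 w n) : WithBot ℕ) ≤ semC1 M q0 w (φ j) (φ (j + 1)) :=
          le_semC1 M q0 w hj1 hj2.le (by rw [Nat.odd_iff]; have h2 : ¬ M.Ω (M.stateAt q0 w n) % 2 = 0 := fun h => hevn (Nat.even_iff.mpr h); omega) hua
        have hgood := hJ j hjJ
        simp only [GoodT] at hgood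
        rcases hgood with hbot | ⟨j', hjj', hlt, hcard⟩
        · rw [hbot] at hle1
          exact absurd (le_bot_iff.mp hle1) (by simp)
        have hlt0 : (M.Ω (M.stateAt q0 w n) : WithBot ℕ) < semC0 M q0 w (φ j') (φ (j' + 1)) :=
          lt_of_le_of_lt hle1 hlt
        rw [lt_semC0_iff] at hlt0
        obtain ⟨p', hp'1, hp'2, hev', hlt'⟩ := hlt0
        have hnp' : n < p' := lt_of_lt_of_le hj2 (le_trans (hφmono (Nat.succ_le_of_lt hjj')) hp'1)
        refine le_trans (Cor_le_of_answer M q0 w hevn hnp' hev' hlt') ?_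
        have hseg : M.segCost q0 w n p' ≤ Cb := by
          have h1 : M.segCost q0 w n p' ≤ M.segCost q0 w (φ j) (φ (j' + 1)) :=
            segCost_mono M q0 w hj1 hp'2
          have h2 : M.segCost q0 w (φ j) (φ (j' + 1)) =
              M.segCost q0 w (φ j) (φ (j + 1)) +
                ∑ k ∈ Finset.Ioc j j', M.segCost q0 w (φ k) (φ (k + 1)) := by
            rw [segCost_sum M q0 w φ hφmono (show j ≤ j' + 1 by omega),
              Finset.Ico_add_one_right_eq_Icc j j',
              Finset.Icc_eq_cons_Ioc hjj'.le, Finset.sum_cons]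
          have h3 : ∀ k ∈ Finset.Ioc j j', M.segCost q0 w (φ k) (φ (k + 1)) ≤
              if semL M q0 w (φ k) (φ (k + 1)) = true then d else 0 := by
            intro k _
            by_cases hsl : semL M q0 w (φ k) (φ (k + 1)) = true
            · rw [if_pos hsl]
              exact le_trans (segCost_le_sub M q0 w _ _) (hd k)
            · rw [if_neg hsl]
              refine le_of_eq (segCost_eq_zero M q0 w ?_)
              intro p hp hc
              exact hsl ((semL_iff M q0 w _ _).mpr ⟨p, hp, hc⟩)
          have h4 : ∑ k ∈ Finset.Ioc j j',
              (if semL M q0 w (φ k) (φ (k + 1)) = true then d else 0) =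
              ((Finset.Ioc j j').filter fun k => semL M q0 w (φ k) (φ (k + 1)) = true).card * d := by
            rw [← Finset.sum_filter, Finset.sum_const, smul_eq_mul]
          have h5 : M.segCost q0 w (φ j) (φ (j + 1)) ≤ d :=
            le_trans (segCost_le_sub M q0 w _ _) (hd j)
          have h6 := Finset.sum_le_sum h3
          have h7 : ((Finset.Ioc j j').filter
              fun k => semL M q0 w (φ k) (φ (k + 1)) = true).card * d ≤ B * d :=
            Nat.mul_le_mul_right d hcard
          omega
        exact_mod_cast hseg
      · -- answered within the block
        rw [unansIn] at hua
        push_neg at hua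
        obtain ⟨p', hp'1, hp'2, hEL⟩ := hua
        refine le_trans (Cor_le_of_answer M q0 w hevn hp'2 hEL.1 hEL.2) ?_
        have h1 := segCost_le_sub M q0 w n p'
        have h2 := hd j
        exact_mod_cast show M.segCost q0 w n p' ≤ Cb by omega
    refine lt_of_le_of_lt
      (Filter.limsup_le_of_le (by isBoundedDefault)
        (Filter.eventually_atTop.mpr ⟨φ J, hclaim⟩)) ?_
    exact lt_top_iff_ne_top.mpr (ENat.coe_ne_top Cb)

end PACost

/-- run replacement, bounded on both sides. If corresponding pieces of the
two decomposed infinite runs have the same type and the lengths of the pieces are bounded on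
both sides, then one concatenated run is accepting iff the other one is. -/
theorem statement1 {Q A : Type} [Fintype Q] [Fintype A] (M : PACost Q A)
    (q1 q2 : Q) (w1 w2 : ℕ → A) (φ1 φ2 : ℕ → ℕ)
    (hmono1 : StrictMono φ1) (hmono2 : StrictMono φ2)
    (h01 : φ1 0 = 0) (h02 : φ2 0 = 0)
    (htype : ∀ j, M.runType (M.stateAt q1 w1 (φ1 j)) (seg w1 (φ1 j) (φ1 (j + 1)))
               = M.runType (M.stateAt q2 w2 (φ2 j)) (seg w2 (φ2 j) (φ2 (j + 1))))
    (hb1 : ∃ d1 : ℕ, ∀ j, φ1 (j + 1) - φ1 j ≤ d1)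
    (hb2 : ∃ d2 : ℕ, ∀ j, φ2 (j + 1) - φ2 j ≤ d2) :
    M.Accepting q1 w1 ↔ M.Accepting q2 w2 := by
  obtain ⟨d1, hd1⟩ := hb1
  obtain ⟨d2, hd2⟩ := hb2
  have hcomp : ∀ j,
      (PACost.semC0 M q1 w1 (φ1 j) (φ1 (j + 1)) = PACost.semC0 M q2 w2 (φ2 j) (φ2 (j + 1))) ∧
      (PACost.semC1 M q1 w1 (φ1 j) (φ1 (j + 1)) = PACost.semC1 M q2 w2 (φ2 j) (φ2 (j + 1))) ∧
      (PACost.semL M q1 w1 (φ1 j) (φ1 (j + 1)) = PACost.semL M q2 w2 (φ2 j) (φ2 (j + 1))) := by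
    intro j
    have h := htype j
    rw [PACost.runType_spec M q1 w1 (hmono1 (Nat.lt_succ_self j)),
      PACost.runType_spec M q2 w2 (hmono2 (Nat.lt_succ_self j))] at h
    simp only [Prod.mk.injEq] at h
    exact ⟨h.2.2.1, h.2.2.2.1, h.2.2.2.2⟩
  rw [PACost.accepting_iff_goodT M q1 w1 φ1 hmono1 h01 d1 hd1,
    PACost.accepting_iff_goodT M q2 w2 φ2 hmono2 h02 d2 hd2,
    funext fun j => (hcomp j).1, funext fun j => (hcomp j).2.1,
    funext fun j => (hcomp j).2.2]
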